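/- Let G be a group and k ≥ 1. For σ ∈ A_G(k), the assignment x mod Γ_G(2) ↦ s_σ(x) mod Γ_G(k+2) is a well-defined homomorphism of abelian groups τ̃_k(σ) : G^ab → gr^{k+1}(L_G) (independent of the chosen representative x), the resulting map τ̃_k : A_G(k) → Hom(G^ab, gr^{k+1}(L_G)) is a group homomorphism, and its kernel is exactly A_G(k+1); consequently τ̃_k induces an injective homomorphism τ_k : A_G(k)/A_G(k+1) → Hom(G^ab, gr^{k+1}(L_G)). -/

import Mathlib

/-!
STATEMENT 5: Let G be a group and k ≥ 1. For σ ∈ A_G(k), the assignment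
x mod Γ_G(2) ↦ s_σ(x) mod Γ_G(k+2) is a well-defined homomorphism of abelian groups
τ̃_k(σ) : G^ab → gr^{k+1}(L_G), the resulting map
τ̃_k : A_G(k) → Hom(G^ab, gr^{k+1}(L_G)) is a group homomorphism, and its kernel is
exactly A_G(k+1); consequently τ̃_k induces an injective homomorphism
τ_k : A_G(k)/A_G(k+1) → Hom(G^ab, gr^{k+1}(L_G)).

Here `Γ_G(m) = Subgroup.lowerCentralSeries (⊤ : Subgroup G) (m-1)`, `s_σ(x) = x⁻¹ * σ x`, and equalities of cosets
mod `Γ_G(k+2) = Subgroup.lowerCentralSeries (⊤ : Subgroup G) (k+1)` are expressed in `G ⧸ Subgroup.lowerCentralSeries (⊤ : Subgroup G) (k+1)`.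
The five conjuncts say: (0) s_σ(x) lies in Γ_G(k+1), so its class lives in gr^{k+1};
(1) well-definedness: x ≡ y mod Γ_G(2) implies s_σ(x) ≡ s_σ(y) mod Γ_G(k+2);
(2) τ̃_k(σ) is a homomorphism; (3) τ̃_k is a homomorphism on A_G(k);
(4) the kernel of τ̃_k is exactly A_G(k+1) (whence τ_k is injective).
-/
noncomputable section

/-- For a subgroup `N` of `G`, the subgroup of automorphisms `σ` with `x⁻¹ · x^σ ∈ N`
for all `x`. -/
def fixFiltration {G : Type*} [Group G] (N : Subgroup G) : Subgroup (MulAut G) where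
  carrier := {σ | ∀ x : G, x⁻¹ * σ x ∈ N}
  one_mem' := by intro x; simpa using N.one_mem
  mul_mem' := by
    intro σ τ hσ hτ x
    have h3 : σ (x⁻¹ * τ x) ∈ N := by
      have h4 : σ (x⁻¹ * τ x) =
          (x⁻¹ * τ x) * ((x⁻¹ * τ x)⁻¹ * σ (x⁻¹ * τ x)) := by group
      rw [h4]
      exact N.mul_mem (hτ x) (hσ _)
    have h5 : x⁻¹ * (σ * τ) x = (x⁻¹ * σ x) * σ (x⁻¹ * τ x) := by
      rw [MulAut.mul_apply, map_mul, map_inv]; group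
    rw [h5]
    exact N.mul_mem (hσ x) h3
  inv_mem' := by
    intro σ hσ x
    have h := hσ (σ⁻¹ x)
    rw [MulAut.apply_inv_self] at h
    simpa [mul_inv_rev] using N.inv_mem h

/-- The Andreadakis–Johnson filtration: `johnsonFiltration G k = 𝒜_G(k)`, the kernel of
`Aut G → Aut (G/Γ_G(k+1))`, where `Γ_G(k+1) = Subgroup.lowerCentralSeries (⊤ : Subgroup G) k`. -/
def johnsonFiltration (G : Type*) [Group G] (k : ℕ) : Subgroup (MulAut G) :=
  fixFiltration (Subgroup.lowerCentralSeries (⊤ : Subgroup G) k)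

theorem mem_johnsonFiltration {G : Type*} [Group G] {k : ℕ} {σ : MulAut G} :
    σ ∈ johnsonFiltration G k ↔ ∀ x : G, x⁻¹ * σ x ∈ Subgroup.lowerCentralSeries (⊤ : Subgroup G) k :=
  Iff.rfl


/-- `s_σ(x) = x⁻¹ · x^σ`. -/
def sAct {G : Type*} [Group G] (σ : MulAut G) (x : G) : G := x⁻¹ * σ x

open scoped commutatorElement in
theorem statement5 {G : Type*} [Group G] (k : ℕ) (hk : 1 ≤ k) (σ : MulAut G)
    (hσ : σ ∈ johnsonFiltration G k) :
    (∀ x : G, sAct σ x ∈ Subgroup.lowerCentralSeries (⊤ : Subgroup G) k) ∧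
    (∀ x y : G, x⁻¹ * y ∈ Subgroup.lowerCentralSeries (⊤ : Subgroup G) 1 →
      (QuotientGroup.mk (sAct σ x) : G ⧸ Subgroup.lowerCentralSeries (⊤ : Subgroup G) (k + 1)) =
        QuotientGroup.mk (sAct σ y)) ∧
    (∀ x y : G,
      (QuotientGroup.mk (sAct σ (x * y)) : G ⧸ Subgroup.lowerCentralSeries (⊤ : Subgroup G) (k + 1)) =
        QuotientGroup.mk (sAct σ x) * QuotientGroup.mk (sAct σ y)) ∧
    (∀ τ : MulAut G, τ ∈ johnsonFiltration G k → ∀ x : G,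
      (QuotientGroup.mk (sAct (σ * τ) x) : G ⧸ Subgroup.lowerCentralSeries (⊤ : Subgroup G) (k + 1)) =
        QuotientGroup.mk (sAct σ x) * QuotientGroup.mk (sAct τ x)) ∧
    ((∀ x : G, sAct σ x ∈ Subgroup.lowerCentralSeries (⊤ : Subgroup G) (k + 1)) ↔
      σ ∈ johnsonFiltration G (k + 1)) := by
  classical
  -- elements of `Subgroup.lowerCentralSeries (⊤ : Subgroup G) k` become central in the quotient
  have hcent : ∀ c : G, c ∈ Subgroup.lowerCentralSeries (⊤ : Subgroup G) k → ∀ g : G,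
      (QuotientGroup.mk (c * g) : G ⧸ Subgroup.lowerCentralSeries (⊤ : Subgroup G) (k + 1)) =
        QuotientGroup.mk (g * c) := by
    intro c hc g
    rw [QuotientGroup.eq]
    have h1 : c⁻¹ * g * c⁻¹⁻¹ * g⁻¹ ∈ Subgroup.lowerCentralSeries (⊤ : Subgroup G) (k + 1) :=
      Subgroup.lowerCentralSeries_isDescendingCentralSeries.2 c⁻¹ k (inv_mem hc) g
    have h2 := Subgroup.Normal.conj_mem inferInstance _ h1 g⁻¹
    have heq : (c * g)⁻¹ * (g * c) = g⁻¹ * (c⁻¹ * g * c⁻¹⁻¹ * g⁻¹) * g⁻¹⁻¹ := by group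
    rw [heq]; exact h2
  have hQcent : ∀ c : G, c ∈ Subgroup.lowerCentralSeries (⊤ : Subgroup G) k →
      ∀ q : G ⧸ Subgroup.lowerCentralSeries (⊤ : Subgroup G) (k + 1),
      (QuotientGroup.mk c) * q = q * QuotientGroup.mk c := by
    intro c hc q
    induction q using QuotientGroup.induction_on with
    | H g => rw [← QuotientGroup.mk_mul, ← QuotientGroup.mk_mul, hcent c hc g]
  -- commutators with central perturbations
  have haux : ∀ (x y z w : G ⧸ Subgroup.lowerCentralSeries (⊤ : Subgroup G) (k + 1)),
      (∀ q, z * q = q * z) → (∀ q, w * q = q * w) →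
      (x * z) * (y * w) * (x * z)⁻¹ * (y * w)⁻¹ = x * y * x⁻¹ * y⁻¹ := by
    intro x y z w hz hw
    have h1 : z * (y * w) * z⁻¹ = y * w := by rw [hz (y * w)]; group
    have h2 : w * x⁻¹ * w⁻¹ = x⁻¹ := by rw [hw x⁻¹]; group
    calc (x * z) * (y * w) * (x * z)⁻¹ * (y * w)⁻¹
        = x * (z * (y * w) * z⁻¹) * x⁻¹ * (y * w)⁻¹ := by group
      _ = x * (y * w) * x⁻¹ * (y * w)⁻¹ := by rw [h1]
      _ = x * y * (w * x⁻¹ * w⁻¹) * y⁻¹ := by group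
      _ = x * y * x⁻¹ * y⁻¹ := by rw [h2]
  -- σ acts trivially mod LCS (k+1) on the commutator subgroup
  have hfix : ∀ c : G, c ∈ Subgroup.lowerCentralSeries (⊤ : Subgroup G) 1 →
      (QuotientGroup.mk (σ c) : G ⧸ Subgroup.lowerCentralSeries (⊤ : Subgroup G) (k + 1)) =
        QuotientGroup.mk c := by
    intro c hc
    rw [Subgroup.top_lowerCentralSeries_one, commutator_def, Subgroup.commutator_def] at hc
    induction hc using Subgroup.closure_induction with
    | mem x hx =>
      obtain ⟨a, -, b, -, rfl⟩ := hx
      have hua : a⁻¹ * σ a ∈ Subgroup.lowerCentralSeries (⊤ : Subgroup G) k := hσ a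
      have hub : b⁻¹ * σ b ∈ Subgroup.lowerCentralSeries (⊤ : Subgroup G) k := hσ b
      have ea : σ a = a * (a⁻¹ * σ a) := by group
      have eb : σ b = b * (b⁻¹ * σ b) := by group
      have expand : σ ⁅a, b⁆ =
          (a * (a⁻¹ * σ a)) * (b * (b⁻¹ * σ b)) * (a * (a⁻¹ * σ a))⁻¹ *
            (b * (b⁻¹ * σ b))⁻¹ := by
        rw [commutatorElement_def]
        simp only [map_mul, map_inv]
        group
      rw [expand]
      simp only [QuotientGroup.mk_mul, QuotientGroup.mk_inv]
      have hz1 : ((QuotientGroup.mk a : G ⧸ Subgroup.lowerCentralSeries (⊤ : Subgroup G) (k + 1)))⁻¹ *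
          QuotientGroup.mk (σ a) = QuotientGroup.mk (a⁻¹ * σ a) := by simp; rfl
      have hw1 : ((QuotientGroup.mk b : G ⧸ Subgroup.lowerCentralSeries (⊤ : Subgroup G) (k + 1)))⁻¹ *
          QuotientGroup.mk (σ b) = QuotientGroup.mk (b⁻¹ * σ b) := by simp; rfl
      rw [hz1, hw1, haux _ _ _ _ (hQcent _ hua) (hQcent _ hub), commutatorElement_def]
      simp; rfl
    | one => simp
    | mul x y hx hy ihx ihy =>
      rw [map_mul, QuotientGroup.mk_mul, QuotientGroup.mk_mul, ihx, ihy]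
    | inv x hx ihx =>
      rw [map_inv, QuotientGroup.mk_inv, QuotientGroup.mk_inv, ihx]
  refine ⟨hσ, ?_, ?_, ?_, Iff.rfl⟩
  · -- well-definedness
    intro x y hxy
    have hy : y = x * (x⁻¹ * y) := by group
    set c := x⁻¹ * y with hc
    have e1 : sAct σ y = c⁻¹ * sAct σ x * c * (c⁻¹ * σ c) := by
      rw [hy]
      simp only [sAct, map_mul, mul_inv_rev]
      group
    rw [e1]
    simp only [QuotientGroup.mk_mul, QuotientGroup.mk_inv]
    rw [hfix c hxy]
    have hcomm := hQcent (sAct σ x) (hσ x) (QuotientGroup.mk c)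
    rw [show ((QuotientGroup.mk c : G ⧸ Subgroup.lowerCentralSeries (⊤ : Subgroup G) (k + 1)))⁻¹ *
          QuotientGroup.mk (sAct σ x) * QuotientGroup.mk c *
          ((QuotientGroup.mk c)⁻¹ * QuotientGroup.mk c) =
        (QuotientGroup.mk c)⁻¹ * (QuotientGroup.mk (sAct σ x) * QuotientGroup.mk c)
      from by group, hcomm]
    group
  · -- multiplicativity in x
    intro x y
    have e1 : sAct σ (x * y) = y⁻¹ * sAct σ x * y * sAct σ y := by
      simp only [sAct, map_mul, mul_inv_rev]
      group
    rw [e1]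
    simp only [QuotientGroup.mk_mul, QuotientGroup.mk_inv]
    have hcomm := hQcent (sAct σ x) (hσ x) (QuotientGroup.mk y)
    calc (QuotientGroup.mk y)⁻¹ * QuotientGroup.mk (sAct σ x) * QuotientGroup.mk y *
          QuotientGroup.mk (sAct σ y)
        = (QuotientGroup.mk y)⁻¹ * (QuotientGroup.mk (sAct σ x) * QuotientGroup.mk y) *
          QuotientGroup.mk (sAct σ y) := by group
      _ = (QuotientGroup.mk y)⁻¹ * (QuotientGroup.mk y * QuotientGroup.mk (sAct σ x)) *
          QuotientGroup.mk (sAct σ y) := by rw [hcomm]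
      _ = QuotientGroup.mk (sAct σ x) * QuotientGroup.mk (sAct σ y) := by group
  · -- multiplicativity in σ
    intro τ hτ x
    have hτx : sAct τ x ∈ Subgroup.lowerCentralSeries (⊤ : Subgroup G) k := hτ x
    have hτx1 : sAct τ x ∈ Subgroup.lowerCentralSeries (⊤ : Subgroup G) 1 :=
      Subgroup.lowerCentralSeries_antitone _ hk hτx
    have e1 : sAct (σ * τ) x = sAct σ x * σ (sAct τ x) := by
      simp only [sAct, MulAut.mul_apply, map_mul, map_inv]
      group
    rw [e1, QuotientGroup.mk_mul, hfix _ hτx1]
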